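/- arXiv:2101.12107 — 2 statements merged into one kernel-verified Lean document; each statement's English description precedes it below -/
import Mathlib

section
/- Let X be a metric space, φ a continuous flow on X over the group ℝ, Γ₂ ⊆ X a nonempty subset with basin of attraction B = B(Γ₂) under φ, and Γ₁ ⊆ X a nonempty subset such that Γ₁ ∩ B ≠ ∅. Then the following two conditions are equivalent: (i) [irreversible P-tipping from Γ₁ upon a single switch to the frozen system φ] there exist points x_a, x_b ∈ Γ₁ such that infDist(φ(t, x_a), Γ₂) → 0 as t → +∞ and φ(t, x_b) ∉ closure(B) for all t > 0; (ii) [basin instability] Γ₁ is not contained in closure(B). -/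
open Filter Metric

/-- Irreversible P-tipping from `Γ₁` upon a single switch to the frozen system `φ`
(with base attractor `Γ₂` and basin `B = B(Γ₂)`) occurs if and only if `Γ₁` is
basin unstable, i.e. `Γ₁ ⊄ closure B`, given the partial-basin-instability
intersection condition `Γ₁ ∩ B ≠ ∅`. -/
theorem ptipping_iff_basin_instability
    {X : Type*} [MetricSpace X]
    (φ : ℝ × X → X)
    (hcont : Continuous φ)
    (h0 : ∀ x : X, φ (0, x) = x)
    (hadd : ∀ t s : ℝ, ∀ x : X, φ (t + s, x) = φ (t, φ (s, x)))
    (Γ₂ : Set X) (hΓ₂ : Γ₂.Nonempty)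
    (B : Set X)
    (hB : B = {x : X | Tendsto (fun t : ℝ => infDist (φ (t, x)) Γ₂) atTop (nhds 0)})
    (Γ₁ : Set X) (hΓ₁ : Γ₁.Nonempty)
    (hint : (Γ₁ ∩ B).Nonempty) :
    ((∃ xa ∈ Γ₁, Tendsto (fun t : ℝ => infDist (φ (t, xa)) Γ₂) atTop (nhds 0)) ∧
        (∃ xb ∈ Γ₁, ∀ t : ℝ, 0 < t → φ (t, xb) ∉ closure B)) ↔
      ¬ Γ₁ ⊆ closure B := by
  -- B is invariant under the flow
  have hBinv : ∀ t : ℝ, ∀ x ∈ B, φ (t, x) ∈ B := by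
    intro t x hx
    rw [hB] at hx ⊢
    have hx' : Tendsto (fun s : ℝ => infDist (φ (s + t, x)) Γ₂) atTop (nhds 0) :=
      hx.comp (tendsto_atTop_add_const_right atTop t tendsto_id)
    simpa only [hadd, Set.mem_setOf_eq] using hx'
  -- closure B is invariant under the flow
  have hclinv : ∀ t : ℝ, ∀ x ∈ closure B, φ (t, x) ∈ closure B := by
    intro t x hx
    have hc : Continuous fun y : X => φ (t, y) :=
      hcont.comp (continuous_const.prodMk continuous_id)
    exact map_mem_closure (f := fun y => φ (t, y)) hc hx (fun y hy => hBinv t y hy)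
  constructor
  · rintro ⟨-, xb, hxb, hxbt⟩ hsub
    have h1 : φ (1, xb) ∈ closure B := hclinv 1 _ (hsub hxb)
    exact hxbt 1 one_pos h1
  · intro hnsub
    obtain ⟨x, hxΓ, hxB⟩ := Set.not_subset.mp hnsub
    obtain ⟨xa, hxaΓ, hxaB⟩ := hint
    refine ⟨⟨xa, hxaΓ, by rw [hB] at hxaB; exact hxaB⟩, x, hxΓ, ?_⟩
    intro t ht hmem
    apply hxB
    have := hclinv (-t) _ hmem
    rwa [← hadd, neg_add_cancel, h0] at this
end

section
/- Consider the May vector field G with positive parameters r, c, α, β, s, q, μ, ν, ε. Then G is Fréchet differentiable at the extinction equilibrium e₀ = (0, ε/q), and its derivative there is the lower-triangular linear map (n, p) ↦ ( (−r·μ/ν − α·ε/(q·β))·n, (s/q)·n − s·p ). In particular, both eigenvalues −r·μ/ν − α·ε/(q·β) and −s of the linearization at e₀ are negative for all positive parameter values. -/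
set_option maxHeartbeats 1000000

/-- The May (Leslie–Gower–May) vector field. -/
noncomputable def MayField (r c α β s q μ ν ε : ℝ) (x : ℝ × ℝ) : ℝ × ℝ :=
  (r * x.1 * (1 - c / r * x.1) * ((x.1 - μ) / (ν + x.1)) - α * x.1 * x.2 / (β + x.1),
   s * x.2 * (1 - q * x.2 / (x.1 + ε)))

private lemma hasFDerivAt_inv_comp {h : ℝ × ℝ → ℝ} {H : ℝ × ℝ →L[ℝ] ℝ} {x : ℝ × ℝ}
    (hh : HasFDerivAt h H x) (hx : h x ≠ 0) :
    HasFDerivAt (fun y => (h y)⁻¹) ((-(h x ^ 2)⁻¹) • H) x := by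
  have h2 := (hasFDerivAt_inv hx).comp x hh
  refine h2.congr_fderiv ?_
  refine ContinuousLinearMap.ext fun v => ?_
  simp [mul_comm]

/-- The May vector field is Fréchet differentiable at the extinction equilibrium
`e₀ = (0, ε/q)` with lower-triangular derivative
`(n, p) ↦ ((−rμ/ν − αε/(qβ))·n, (s/q)·n − s·p)`; both eigenvalues
`−rμ/ν − αε/(qβ)` and `−s` are negative. -/
theorem May_linearization_at_extinction
    (r c α β s q μ ν ε : ℝ)
    (hr : 0 < r) (hc : 0 < c) (hα : 0 < α) (hβ : 0 < β)
    (hs : 0 < s) (hq : 0 < q) (hμ : 0 < μ) (hν : 0 < ν) (hε : 0 < ε) :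
    HasFDerivAt (MayField r c α β s q μ ν ε)
      (((-(r * μ / ν) - α * ε / (q * β)) • ContinuousLinearMap.fst ℝ ℝ ℝ).prod
        ((s / q) • ContinuousLinearMap.fst ℝ ℝ ℝ +
          (-s) • ContinuousLinearMap.snd ℝ ℝ ℝ)) ((0 : ℝ), ε / q) ∧
    -(r * μ / ν) - α * ε / (q * β) < 0 ∧ -s < 0 := by
  refine ⟨?_, ?_, by linarith⟩
  · have h1 : HasFDerivAt (fun x : ℝ × ℝ => x.1) (ContinuousLinearMap.fst ℝ ℝ ℝ)
        ((0 : ℝ), ε / q) := hasFDerivAt_fst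
    have h2 : HasFDerivAt (fun x : ℝ × ℝ => x.2) (ContinuousLinearMap.snd ℝ ℝ ℝ)
        ((0 : ℝ), ε / q) := hasFDerivAt_snd
    have hν0 : (fun x : ℝ × ℝ => ν + x.1) ((0 : ℝ), ε / q) ≠ 0 := by simp; linarith
    have hβ0 : (fun x : ℝ × ℝ => β + x.1) ((0 : ℝ), ε / q) ≠ 0 := by simp; linarith
    have hε0 : (fun x : ℝ × ℝ => x.1 + ε) ((0 : ℝ), ε / q) ≠ 0 := by simp; linarith
    have hA := (((h1.const_mul r).mul ((h1.const_mul (c / r)).const_sub 1)).mul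
      ((h1.sub_const μ).mul (hasFDerivAt_inv_comp (h1.const_add ν) hν0)))
    have hB := ((h1.const_mul α).mul h2).mul (hasFDerivAt_inv_comp (h1.const_add β) hβ0)
    have hf1 := hA.sub hB
    have hf2 := (h2.const_mul s).mul
      (((h2.const_mul q).mul (hasFDerivAt_inv_comp (h1.add_const ε) hε0)).const_sub 1)
    have hbig := HasFDerivAt.prodMk hf1 hf2
    have heq : MayField r c α β s q μ ν ε = fun x : ℝ × ℝ =>
        (r * x.1 * (1 - c / r * x.1) * ((x.1 - μ) * (ν + x.1)⁻¹)
          - α * x.1 * x.2 * (β + x.1)⁻¹,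
         s * x.2 * (1 - q * x.2 * (x.1 + ε)⁻¹)) := by
      funext x
      simp [MayField, div_eq_mul_inv, mul_assoc]
    rw [heq]
    refine hbig.congr_fderiv ?_
    refine ContinuousLinearMap.ext fun v => ?_
    refine Prod.ext ?_ ?_ <;>
      · simp only [ContinuousLinearMap.prod_apply, ContinuousLinearMap.add_apply,
          ContinuousLinearMap.sub_apply, ContinuousLinearMap.smul_apply,
          ContinuousLinearMap.neg_apply, ContinuousLinearMap.coe_fst',
          ContinuousLinearMap.coe_snd', smul_eq_mul, Pi.mul_apply]
        field_simp
        ring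
  · have h1 : 0 < r * μ / ν := by positivity
    have h2 : 0 < α * ε / (q * β) := by positivity
    linarith
end
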